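/- The Burden-based semantics satisfies Distributed-Defense Precedence: for every finite argumentation framework F = ⟨A,R⟩ and all a,b ∈ A, if |Att₁(a)| = |Att₁(b)|, the number of length-2 paths ending at a equals the number of length-2 paths ending at b, the defense of a is simple and distributed, and the defense of b is simple but not distributed, then a ≻^{Bbs} b. -/

import Mathlib

/-- An abstract argumentation framework: a finite set of arguments together with
an attack relation between them. -/
structure AF where
  args : Finset ℕ
  att : Finset (ℕ × ℕ)
  att_mem : ∀ p ∈ att, p.1 ∈ args ∧ p.2 ∈ args

namespace AF

/-- The direct attackers of an argument. -/
def attackers (F : AF) (a : ℕ) : Finset ℕ :=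
  F.args.filter (fun b => (b, a) ∈ F.att)

end AF

namespace AF

/-- The finite set of paths of length `n` ending at `a`, each path recorded as
the list `[a₀, …, aₙ]` with `a₀ = a` and `a_{i+1}` attacking `a_i`. -/
def pathsTo (F : AF) : ℕ → ℕ → Finset (List ℕ)
  | 0, a => {[a]}
  | n + 1, a => (F.attackers a).biUnion (fun b => (F.pathsTo n b).image (fun l => a :: l))

/-- The discussion count of `a`: `Dis_i(a)` is the number of paths of length `i`
ending at `a` if `i` is odd, and its opposite if `i` is even.  Index `i` of the
vector holds `Dis_{i+1}(a)`. -/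
def disVec (F : AF) (a : ℕ) (i : ℕ) : ℤ :=
  if Odd (i + 1) then ((F.pathsTo (i + 1) a).card : ℤ)
  else -((F.pathsTo (i + 1) a).card : ℤ)

end AF

/-- Strict lexicographic comparison of integer sequences. -/
def lexLT (u v : ℕ → ℤ) : Prop := ∃ i, u i < v i ∧ ∀ j < i, u j = v j

/-- Lexicographic comparison of integer sequences. -/
def lexLE (u v : ℕ → ℤ) : Prop := u = v ∨ lexLT u v

namespace AF

/-- The Burden numbers: `Bur₀(a) = 1` and
`Bur_i(a) = 1 + Σ_{b ∈ Att₁(a)} 1 / Bur_{i-1}(b)`. -/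
noncomputable def bur (F : AF) : ℕ → ℕ → ℝ
  | 0, _ => 1
  | i + 1, a => 1 + ∑ b ∈ F.attackers a, 1 / F.bur i b

end AF

/-- Strict lexicographic comparison of real sequences. -/
def lexLTR (u v : ℕ → ℝ) : Prop := ∃ i, u i < v i ∧ ∀ j < i, u j = v j

namespace AF

/-- `d` is a defender of `a`: `d` attacks some direct attacker of `a`. -/
def IsDefenderOf (F : AF) (d a : ℕ) : Prop :=
  ∃ c, (d, c) ∈ F.att ∧ (c, a) ∈ F.att

/-- The defense of `a` is simple: every defender of `a` attacks exactly one
direct attacker of `a`. -/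
def SimpleDefense (F : AF) (a : ℕ) : Prop :=
  ∀ d, F.IsDefenderOf d a →
    ((F.attackers a).filter (fun c => (d, c) ∈ F.att)).card = 1

/-- The defense of `a` is distributed: every direct attacker of `a` is attacked
by at most one argument. -/
def DistributedDefense (F : AF) (a : ℕ) : Prop :=
  ∀ c ∈ F.attackers a, (F.attackers c).card ≤ 1

end AF

namespace AF

lemma mem_pathsTo_cons (F : AF) : ∀ (n a : ℕ) (l : List ℕ), l ∈ F.pathsTo n a → ∃ t, l = a :: t := by
  intro n
  cases n with
  | zero =>
    intro a l hl
    simp [pathsTo] at hl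
    exact ⟨[], by simp [hl]⟩
  | succ n =>
    intro a l hl
    simp only [pathsTo, Finset.mem_biUnion, Finset.mem_image] at hl
    obtain ⟨b, _, t, _, rfl⟩ := hl
    exact ⟨t, rfl⟩

lemma card_pathsTo_succ (F : AF) (n a : ℕ) :
    (F.pathsTo (n+1) a).card = ∑ c ∈ F.attackers a, (F.pathsTo n c).card := by
  rw [show F.pathsTo (n+1) a
      = (F.attackers a).biUnion (fun b => (F.pathsTo n b).image (fun l => a :: l)) from rfl]
  rw [Finset.card_biUnion]
  · exact Finset.sum_congr rfl fun c _ =>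
      Finset.card_image_of_injective _ (fun x y h => by simpa using h)
  · intro c hc c' hc' hne
    rw [Function.onFun, Finset.disjoint_left]
    rintro l hl hl'
    simp only [Finset.mem_image] at hl hl'
    obtain ⟨t, ht, rfl⟩ := hl
    obtain ⟨t', ht', h⟩ := hl'
    obtain ⟨s, rfl⟩ := F.mem_pathsTo_cons n c t ht
    obtain ⟨s', rfl⟩ := F.mem_pathsTo_cons n c' t' ht'
    apply hne
    have := (List.cons.injEq _ _ _ _).mp h
    have := (List.cons.injEq _ _ _ _).mp this.2
    exact this.1.symm

lemma card_pathsTo_two (F : AF) (a : ℕ) :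
    (F.pathsTo 2 a).card = ∑ c ∈ F.attackers a, (F.attackers c).card := by
  rw [F.card_pathsTo_succ 1 a]
  refine Finset.sum_congr rfl fun c _ => ?_
  rw [F.card_pathsTo_succ 0 c]
  simp [pathsTo]

lemma bur_one (F : AF) (x : ℕ) : F.bur 1 x = 1 + ((F.attackers x).card : ℝ) := by
  show 1 + ∑ b ∈ F.attackers x, 1 / F.bur 0 b = _
  simp [bur]

lemma bur_two (F : AF) (x : ℕ) :
    F.bur 2 x = 1 + ∑ c ∈ F.attackers x, 1 / (1 + ((F.attackers c).card : ℝ)) := by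
  show 1 + ∑ c ∈ F.attackers x, 1 / F.bur 1 c = _
  rw [Finset.sum_congr rfl fun c _ => by rw [F.bur_one c]]

end AF

lemma bbs_ddp_aux (n : ℕ) : 1 - (n : ℝ) / 2 ≤ 1 / (1 + n) := by
  have h : (0:ℝ) < 1 + n := by positivity
  rw [le_div_iff₀ h]
  rcases n with _ | k
  · norm_num
  · have : (1:ℝ) ≤ (k + 1 : ℕ) := by exact_mod_cast Nat.one_le_iff_ne_zero.mpr (Nat.succ_ne_zero k)
    nlinarith

lemma bbs_ddp_aux' (n : ℕ) (hn : 2 ≤ n) : 1 - (n : ℝ) / 2 < 1 / (1 + n) := by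
  have h1 : (0:ℝ) < 1 / (1 + n) := by positivity
  have h2 : (2:ℝ) ≤ n := by exact_mod_cast hn
  linarith

/-- The Burden-based semantics satisfies Distributed-Defense Precedence. -/
theorem bbs_ddp (F : AF) :
    ∀ a ∈ F.args, ∀ b ∈ F.args,
      (F.attackers a).card = (F.attackers b).card →
      (F.pathsTo 2 a).card = (F.pathsTo 2 b).card →
      F.SimpleDefense a → F.DistributedDefense a →
      F.SimpleDefense b → ¬ F.DistributedDefense b →
      lexLTR (fun i => F.bur i a) (fun i => F.bur i b) := by
  intro a _ b _ hcard hpaths _ hdista _ hndistb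
  refine ⟨2, ?_, ?_⟩
  · -- bur 2 a < bur 2 b
    simp only [AF.bur_two]
    have ha : ∑ c ∈ F.attackers a, 1 / (1 + ((F.attackers c).card : ℝ))
        = ∑ c ∈ F.attackers a, (1 - ((F.attackers c).card : ℝ) / 2) := by
      refine Finset.sum_congr rfl fun c hc => ?_
      obtain h | h := Nat.le_one_iff_eq_zero_or_eq_one.mp (hdista c hc) <;>
        rw [h] <;> norm_num
    have hsum : (∑ c ∈ F.attackers a, ((F.attackers c).card : ℝ))
        = ∑ c ∈ F.attackers b, ((F.attackers c).card : ℝ) := by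
      have h := hpaths
      rw [F.card_pathsTo_two, F.card_pathsTo_two] at h
      exact_mod_cast h
    have hmid : ∑ c ∈ F.attackers a, (1 - ((F.attackers c).card : ℝ) / 2)
        = ∑ c ∈ F.attackers b, (1 - ((F.attackers c).card : ℝ) / 2) := by
      rw [Finset.sum_sub_distrib, Finset.sum_sub_distrib, Finset.sum_const,
        Finset.sum_const, hcard]
      congr 1
      rw [← Finset.sum_div, ← Finset.sum_div, hsum]
    have hb : ∑ c ∈ F.attackers b, (1 - ((F.attackers c).card : ℝ) / 2)
        < ∑ c ∈ F.attackers b, 1 / (1 + ((F.attackers c).card : ℝ)) := by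
      unfold AF.DistributedDefense at hndistb
      push_neg at hndistb
      obtain ⟨c0, hc0, hc0'⟩ := hndistb
      exact Finset.sum_lt_sum (fun c _ => bbs_ddp_aux _)
        ⟨c0, hc0, bbs_ddp_aux' _ (by omega)⟩
    linarith [ha, hmid, hb]
  · intro j hj
    interval_cases j
    · rfl
    · simp only [AF.bur_one, hcard]
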